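/- Assume a₁ ≠ d₁, the denominators b₁ + b₁d₁/(a₁−d₁), b₂ − b₁(b₁d₁+(d₁−a₁)kρ)/((a₁−d₁)²k), and b₁²d₁ − b₂(a₁−d₁)²k + b₁(−a₁+d₁)kρ are nonzero. Then the characteristic polynomial (over ℂ) of the Jacobian matrix of the right-hand side of system (L1) at p_3 = ( b₁d₁/(a₁−d₁), −b₁(b₁d₁+(d₁−a₁)kρ)/((a₁−d₁)²k), 0 ) factors as (t − μ)(t − λ₊)(t − λ₋), where λ₊ and λ₋ are the two complex numbers (1/(2a₁(a₁−d₁)k))(−a₁b₁d₁ − b₁d₁² + a₁d₁kρ − d₁²kρ ± √Δ) with Δ = d₁(−4a₁(a₁−d₁)²k(−b₁d₁ + (a₁−d₁)kρ) + d₁(a₁(b₁−kρ) + d₁(b₁+kρ))²) (√Δ denoting a complex square root of Δ), and μ = −d₂ + a₂b₁(b₁d₁ + (−a₁+d₁)kρ)/(b₁²d₁ − b₂(a₁−d₁)²k + b₁(−a₁+d₁)kρ). -/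

import Mathlib

open Polynomial

/-- The right-hand side of the tritrophic food chain system (L1), as a map `ℝ³ → ℝ³`. -/
noncomputable def L1rhs (a₁ a₂ b₁ b₂ d₁ d₂ k ρ : ℝ) (p : Fin 3 → ℝ) : Fin 3 → ℝ :=
  ![p 0 * (ρ - p 0 / k - a₁ * p 1 / (b₁ + p 0)),
    p 1 * (a₁ * p 0 / (b₁ + p 0) - a₂ * p 2 / (b₂ + p 1) - d₁),
    p 2 * (a₂ * p 1 / (b₂ + p 1) - d₂)]

/-- The Jacobian matrix of `f : ℝ³ → ℝ³` at `p`: the 3×3 matrix of partial derivatives. -/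
noncomputable def jacobian (f : (Fin 3 → ℝ) → Fin 3 → ℝ) (p : Fin 3 → ℝ) :
    Matrix (Fin 3) (Fin 3) ℝ :=
  Matrix.of fun i j => deriv (fun s : ℝ => f (Function.update p j s) i) (p j)

lemma upd0' (x y : ℝ) (s : ℝ) : Function.update ![x,y,(0:ℝ)] 0 s = ![s,y,0] := by
  ext i; fin_cases i <;> simp [Function.update]
lemma upd1' (x y : ℝ) (s : ℝ) : Function.update ![x,y,(0:ℝ)] 1 s = ![x,s,0] := by
  ext i; fin_cases i <;> simp [Function.update]
lemma upd2' (x y : ℝ) (s : ℝ) : Function.update ![x,y,(0:ℝ)] 2 s = ![x,y,s] := by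
  ext i; fin_cases i <;> simp [Function.update]

lemma jac_eq' (a₁ a₂ b₁ b₂ d₁ d₂ k ρ x y : ℝ) (hbx : b₁ + x ≠ 0) (hby : b₂ + y ≠ 0) :
    jacobian (L1rhs a₁ a₂ b₁ b₂ d₁ d₂ k ρ) ![x, y, 0] =
    !![(ρ - x/k - a₁*y/(b₁+x)) + x*(-(1/k) + a₁*y/(b₁+x)^2), -(a₁*x/(b₁+x)), 0;
       y*(a₁*b₁/(b₁+x)^2), a₁*x/(b₁+x) - d₁, -(y*(a₂/(b₂+y)));
       0, 0, a₂*y/(b₂+y) - d₂] := by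
  ext i j
  fin_cases i <;> fin_cases j <;> simp [jacobian, upd0', upd1', upd2', L1rhs]
  · have h1 : HasDerivAt (fun s : ℝ => ρ - s / k - a₁ * y / (b₁ + s))
        (-(1/k) + a₁*y/(b₁+x)^2) x := by
      have hq : HasDerivAt (fun s : ℝ => a₁ * y / (b₁ + s))
          ((0*(b₁+x) - (a₁*y)*1)/(b₁+x)^2) x :=
        (hasDerivAt_const x (a₁*y)).div ((hasDerivAt_id x).const_add b₁) hbx
      have h2 : HasDerivAt (fun s : ℝ => ρ - s / k) (-(1/k)) x := by
        simpa using ((hasDerivAt_id x).div_const k).const_sub ρ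
      exact (h2.sub hq).congr_deriv (by ring)
    have h3 := ((hasDerivAt_id x).mul h1).deriv
    simp only [id] at h3
    rw [show (fun s : ℝ => s * (ρ - s / k - a₁ * y / (b₁ + s))) = (id * fun s => ρ - s / k - a₁ * y / (b₁ + s)) from rfl, h3]; ring
  · have h1 : HasDerivAt (fun t : ℝ => ρ - x / k - a₁ * t / (b₁ + x))
        (-(a₁ * 1 / (b₁ + x))) y :=
      (((hasDerivAt_id y).const_mul a₁).div_const (b₁+x)).const_sub (ρ - x / k)
    ring
  · left
    have h1 : HasDerivAt (fun t : ℝ => a₁ * t / (b₁ + t))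
        (((a₁*1)*(b₁+x) - (a₁*x)*1)/(b₁+x)^2) x :=
      (((hasDerivAt_id x).const_mul a₁).div ((hasDerivAt_id x).const_add b₁) hbx)
    rw [h1.deriv]; ring

lemma charpoly3' (A B Cc E D m : ℂ) :
    (!![A,B,0;Cc,E,D;0,0,m]).charpoly
      = (X - C m) * (X^2 - C (A+E)*X + C (A*E - B*Cc)) := by
  rw [Matrix.charpoly, Matrix.det_fin_three]
  simp [Matrix.charmatrix_apply_eq, Matrix.charmatrix_apply_ne, Matrix.charmatrix_apply]
  ring

lemma mapmat' (f : ℝ →+* ℂ) (A B Cc E D m : ℝ) :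
    (!![A,B,0;Cc,E,D;0,0,m]).map f = !![f A, f B, 0; f Cc, f E, f D; 0, 0, f m] := by
  ext i j; fin_cases i <;> fin_cases j <;> simp

/-- The characteristic polynomial (over ℂ) of the Jacobian of (L1) at the
equilibrium `p₃` factors as `(t − μ)(t − λ₊)(t − λ₋)`, where `λ±` are given by the
quadratic formula with any complex square root `s` of the discriminant `Δ`. -/
theorem stmt_8 (a₁ a₂ b₁ b₂ d₁ d₂ k ρ : ℝ)
    (ha₁ : 0 < a₁) (ha₂ : 0 < a₂) (hb₁ : 0 < b₁) (hb₂ : 0 < b₂)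
    (hd₁ : 0 < d₁) (hd₂ : 0 < d₂) (hk : 0 < k) (hρ : 0 < ρ)
    (hne : a₁ ≠ d₁)
    (hden₁ : b₁ + b₁ * d₁ / (a₁ - d₁) ≠ 0)
    (hden₂ : b₂ - b₁ * (b₁ * d₁ + (d₁ - a₁) * k * ρ) / ((a₁ - d₁) ^ 2 * k) ≠ 0)
    (hden₃ : b₁ ^ 2 * d₁ - b₂ * (a₁ - d₁) ^ 2 * k + b₁ * (-a₁ + d₁) * k * ρ ≠ 0)
    (Δ : ℝ)
    (hΔ : Δ = d₁ * (-4 * a₁ * (a₁ - d₁) ^ 2 * k * (-(b₁ * d₁) + (a₁ - d₁) * k * ρ) +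
            d₁ * (a₁ * (b₁ - k * ρ) + d₁ * (b₁ + k * ρ)) ^ 2))
    (s : ℂ) (hs : s ^ 2 = (Δ : ℂ))
    (μ : ℂ)
    (hμ : μ = -(d₂ : ℂ) + (a₂ * b₁ * (b₁ * d₁ + (-a₁ + d₁) * k * ρ) : ℝ) /
            ((b₁ ^ 2 * d₁ - b₂ * (a₁ - d₁) ^ 2 * k + b₁ * (-a₁ + d₁) * k * ρ : ℝ) : ℂ))
    (lamP lamM : ℂ)
    (hlamP : lamP = (1 / (2 * a₁ * (a₁ - d₁) * k) : ℝ) *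
            (((-(a₁ * b₁ * d₁) - b₁ * d₁ ^ 2 + a₁ * d₁ * k * ρ - d₁ ^ 2 * k * ρ : ℝ) : ℂ) + s))
    (hlamM : lamM = (1 / (2 * a₁ * (a₁ - d₁) * k) : ℝ) *
            (((-(a₁ * b₁ * d₁) - b₁ * d₁ ^ 2 + a₁ * d₁ * k * ρ - d₁ ^ 2 * k * ρ : ℝ) : ℂ) - s)) :
    ((jacobian (L1rhs a₁ a₂ b₁ b₂ d₁ d₂ k ρ)
        ![b₁ * d₁ / (a₁ - d₁),
          -(b₁ * (b₁ * d₁ + (d₁ - a₁) * k * ρ)) / ((a₁ - d₁) ^ 2 * k),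
          0]).map (algebraMap ℝ ℂ)).charpoly
      = (X - C μ) * (X - C lamP) * (X - C lamM) := by
  have had : a₁ - d₁ ≠ 0 := sub_ne_zero.mpr hne
  have hk' : k ≠ 0 := ne_of_gt hk
  have ha₁' : a₁ ≠ 0 := ne_of_gt ha₁
  set x : ℝ := b₁ * d₁ / (a₁ - d₁) with hx
  set y : ℝ := -(b₁ * (b₁ * d₁ + (d₁ - a₁) * k * ρ)) / ((a₁ - d₁) ^ 2 * k) with hy
  have hbx : b₁ + x ≠ 0 := hden₁
  have hby : b₂ + y ≠ 0 := by
    have : b₂ + y = b₂ - b₁ * (b₁ * d₁ + (d₁ - a₁) * k * ρ) / ((a₁ - d₁) ^ 2 * k) := by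
      rw [hy]; ring
    rw [this]; exact hden₂
  have hbx' : b₁ + x = a₁ * b₁ / (a₁ - d₁) := by
    rw [hx]; field_simp; ring
  have hby' : b₂ + y = -(b₁ ^ 2 * d₁ - b₂ * (a₁ - d₁) ^ 2 * k + b₁ * (-a₁ + d₁) * k * ρ) /
      ((a₁ - d₁) ^ 2 * k) := by
    rw [hy]; field_simp; ring
  rw [jac_eq' a₁ a₂ b₁ b₂ d₁ d₂ k ρ x y hbx hby, mapmat', charpoly3']
  simp only [Complex.coe_algebraMap]
  set A : ℝ := (ρ - x/k - a₁*y/(b₁+x)) + x*(-(1/k) + a₁*y/(b₁+x)^2) with hA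
  set B : ℝ := -(a₁*x/(b₁+x)) with hB
  set Cc : ℝ := y*(a₁*b₁/(b₁+x)^2) with hCc
  set E : ℝ := a₁*x/(b₁+x) - d₁ with hE
  set m : ℝ := a₂*y/(b₂+y) - d₂ with hm
  set T : ℝ := -(a₁ * b₁ * d₁) - b₁ * d₁ ^ 2 + a₁ * d₁ * k * ρ - d₁ ^ 2 * k * ρ with hT
  set c : ℝ := 1 / (2 * a₁ * (a₁ - d₁) * k) with hc
  have hb₁' : b₁ ≠ 0 := ne_of_gt hb₁
  have h1 : ((m : ℝ) : ℂ) = μ := by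
    have hmr : m = -d₂ + a₂ * b₁ * (b₁ * d₁ + (-a₁ + d₁) * k * ρ) /
        (b₁ ^ 2 * d₁ - b₂ * (a₁ - d₁) ^ 2 * k + b₁ * (-a₁ + d₁) * k * ρ) := by
      have key : a₂ * y / (b₂ + y) = a₂ * b₁ * (b₁ * d₁ + (-a₁ + d₁) * k * ρ) /
          (b₁ ^ 2 * d₁ - b₂ * (a₁ - d₁) ^ 2 * k + b₁ * (-a₁ + d₁) * k * ρ) := by
        rw [div_eq_div_iff hby hden₃, hby', hy]
        field_simp
        ring
      rw [hm, key]
      ring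
    rw [hmr, hμ]
    push_cast
    ring
  have h2 : ((A : ℝ) : ℂ) + ((E : ℝ) : ℂ) = lamP + lamM := by
    have hsum : lamP + lamM = ((2 * c * T : ℝ) : ℂ) := by
      rw [hlamP, hlamM]; push_cast; ring
    have hAE : A + E = 2 * c * T := by
      rw [hA, hE, hc, hT, hbx', hx, hy]
      field_simp
      ring
    rw [hsum, ← hAE]
    push_cast
    ring
  have h3 : ((A : ℝ) : ℂ) * ((E : ℝ) : ℂ) - ((B : ℝ) : ℂ) * ((Cc : ℝ) : ℂ) = lamP * lamM := by
    have hprod : lamP * lamM = ((c ^ 2 * (T ^ 2 - Δ) : ℝ) : ℂ) := by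
      rw [hlamP, hlamM]
      push_cast
      linear_combination (-(c : ℂ) ^ 2) * hs
    have hreal : A * E - B * Cc = c ^ 2 * (T ^ 2 - Δ) := by
      rw [hA, hB, hCc, hE, hc, hT, hΔ, hbx', hx, hy]
      field_simp
      ring
    rw [hprod, ← hreal]
    push_cast
    ring
  rw [h1, h2, h3, C_add, C_mul]
  ring
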